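/- With the notation of the context, for all θ, φ ∈ ℝ: S₁(θ,φ) = ((cosθ+1)/2 + ((cosθ−1)/2)·cos 2φ)·S₁ + ((cosθ−1)/2)·sin 2φ·S₂ + cosφ·sinθ·S₃; and S₂(θ,φ) = ((cosθ−1)/2)·sin 2φ·S₁ + ((cosθ+1)/2 − ((cosθ−1)/2)·cos 2φ)·S₂ + sinθ·sinφ·S₃. -/

import Mathlib

open Complex NormedSpace

section helpers

variable {A : Type*} [NormedRing A] [NormedAlgebra ℂ A] [CompleteSpace A]

private lemma my_exp_deriv (M : A) (t : ℝ) :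
    HasDerivAt (fun u : ℝ => NormedSpace.exp (u • M)) (M * NormedSpace.exp (t • M)) t := by
  have := hasDerivAt_exp_smul_const' (𝕂 := ℝ) M t
  exact this

private lemma my_exp_deriv' (M : A) (t : ℝ) :
    HasDerivAt (fun u : ℝ => NormedSpace.exp (-(u • M))) (NormedSpace.exp (-(t • M)) * (-M)) t := by
  have := hasDerivAt_exp_smul_const (𝕂 := ℝ) (-M) t
  simpa [smul_neg] using this

set_option linter.unusedSectionVars false in
private lemma my_cancel (E E' c c' M : A) (h1 : E * M = M * E) (h2 : E' * M = M * E')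
    (hc : c' = c * M - M * c) :
    (M * E * c + E * c') * E' + E * c * (E' * -M) = 0 := by
  subst hc
  have : (M * E * c + E * (c * M - M * c)) * E' + E * c * (E' * -M)
      = (M*E)*(c*E') + (E*c)*(M*E') - (E*M)*(c*E') - (E*c)*(E'*M) := by noncomm_ring
  rw [this, h1, h2]
  noncomm_ring

private lemma conj_exp (M : A) (c : ℝ → A)
    (hd : ∀ t, HasDerivAt c (c t * M - M * c t) t) (θ : ℝ) :
    NormedSpace.exp (-(θ • M)) * c 0 * NormedSpace.exp (θ • M) = c θ := by
  have hcomm : ∀ t : ℝ, NormedSpace.exp (t • M) * M = M * NormedSpace.exp (t • M) := fun t =>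
    (((Commute.refl M).smul_left t).exp_left).eq
  have hcomm' : ∀ t : ℝ, NormedSpace.exp (-(t • M)) * M = M * NormedSpace.exp (-(t • M)) := fun t =>
    (((Commute.refl M).smul_left t).neg_left.exp_left).eq
  set g : ℝ → A := fun t => NormedSpace.exp (t • M) * c t * NormedSpace.exp (-(t • M)) with hg
  have hgd : ∀ t, HasDerivAt g 0 t := by
    intro t
    have h1 : HasDerivAt (fun u : ℝ => NormedSpace.exp (u • M) * c u)
        (M * NormedSpace.exp (t • M) * c t + NormedSpace.exp (t • M) * (c t * M - M * c t)) t :=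
      (my_exp_deriv M t).mul (hd t)
    have h2 := h1.mul (my_exp_deriv' M t)
    have := my_cancel (NormedSpace.exp (t • M)) (NormedSpace.exp (-(t • M))) (c t) (c t * M - M * c t) M
      (hcomm t) (hcomm' t) rfl
    rw [this] at h2
    exact h2
  have hconst : g θ = g 0 :=
    is_const_of_deriv_eq_zero (fun t => (hgd t).differentiableAt)
      (fun t => (hgd t).deriv) θ 0
  have hinv : NormedSpace.exp (-(θ • M)) * NormedSpace.exp (θ • M) = 1 := by
    letI : NormedAlgebra ℚ A := .restrictScalars ℚ ℂ A
    rw [← exp_add_of_commute ((Commute.refl (θ • M)).neg_left), neg_add_cancel,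
      NormedSpace.exp_zero]
  have h0 : g 0 = c 0 := by simp [hg]
  calc NormedSpace.exp (-(θ • M)) * c 0 * NormedSpace.exp (θ • M)
      = NormedSpace.exp (-(θ • M)) * g θ * NormedSpace.exp (θ • M) := by rw [hconst, h0]
    _ = (NormedSpace.exp (-(θ • M)) * NormedSpace.exp (θ • M)) * c θ * (NormedSpace.exp (-(θ • M)) * NormedSpace.exp (θ • M)) := by
        simp only [hg]; noncomm_ring
    _ = c θ := by rw [hinv]; simp

set_option linter.unusedSectionVars false in
private lemma comm_expand (a b d p q : ℂ) (S₁ S₂ S₃ : A) :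
    (a•S₁+b•S₂+d•S₃)*(p•S₁+q•S₂) - (p•S₁+q•S₂)*(a•S₁+b•S₂+d•S₃)
      = (a*q - b*p) • (S₁*S₂ - S₂*S₁) + (d*p)•(S₃*S₁ - S₁*S₃) - (d*q)•(S₂*S₃ - S₃*S₂) := by
  simp only [mul_add, add_mul, smul_mul_assoc, mul_smul_comm, smul_smul, smul_sub, sub_smul]
  module

set_option linter.unusedSectionVars false in
private lemma ode_rhs (S₁ S₂ S₃ : A)
    (h12 : S₁ * S₂ - S₂ * S₁ = Complex.I • S₃)
    (h23 : S₂ * S₃ - S₃ * S₂ = Complex.I • S₁)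
    (h31 : S₃ * S₁ - S₁ * S₃ = Complex.I • S₂)
    (a b d p q : ℂ) :
    (a•S₁+b•S₂+d•S₃)*(p•S₁+q•S₂) - (p•S₁+q•S₂)*(a•S₁+b•S₂+d•S₃)
      = (-(d*q*Complex.I))•S₁ + (d*p*Complex.I)•S₂ + ((a*q-b*p)*Complex.I)•S₃ := by
  rw [comm_expand, h12, h23, h31]
  module

set_option linter.unusedSectionVars false in
private lemma ode_sol (S₁ S₂ S₃ : A)
    (h12 : S₁ * S₂ - S₂ * S₁ = Complex.I • S₃)
    (h23 : S₂ * S₃ - S₃ * S₂ = Complex.I • S₁)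
    (h31 : S₃ * S₁ - S₁ * S₃ = Complex.I • S₂)
    (p q : ℂ) (a b d a' b' d' : ℝ → ℂ)
    (ha : ∀ t, HasDerivAt a (a' t) t) (hb : ∀ t, HasDerivAt b (b' t) t)
    (hd : ∀ t, HasDerivAt d (d' t) t)
    (hA : ∀ t, a' t = -(d t * q * Complex.I))
    (hB : ∀ t, b' t = d t * p * Complex.I)
    (hD : ∀ t, d' t = (a t * q - b t * p) * Complex.I) (t : ℝ) :
    HasDerivAt (fun t => a t • S₁ + b t • S₂ + d t • S₃)
      ((a t • S₁ + b t • S₂ + d t • S₃) * (p•S₁+q•S₂)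
        - (p•S₁+q•S₂) * (a t • S₁ + b t • S₂ + d t • S₃)) t := by
  have h := (((ha t).smul_const S₁).add ((hb t).smul_const S₂)).add ((hd t).smul_const S₃)
  have he : a' t • S₁ + b' t • S₂ + d' t • S₃
      = (a t • S₁ + b t • S₂ + d t • S₃) * (p•S₁+q•S₂)
        - (p•S₁+q•S₂) * (a t • S₁ + b t • S₂ + d t • S₃) := by
    rw [ode_rhs S₁ S₂ S₃ h12 h23 h31, hA, hB, hD]
  rw [he] at h
  exact h

end helpers

/- coefficient functions -/
noncomputable def su2a1 (φ : ℝ) : ℝ → ℂ := fun t =>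
  ((Real.cos t : ℂ) + 1) / 2 + ((Real.cos t : ℂ) - 1) / 2 * (Real.cos (2 * φ) : ℂ)
noncomputable def su2a1' (φ : ℝ) : ℝ → ℂ := fun t =>
  -(Real.sin t : ℂ) / 2 + -(Real.sin t : ℂ) / 2 * (Real.cos (2 * φ) : ℂ)
noncomputable def su2b1 (φ : ℝ) : ℝ → ℂ := fun t =>
  ((Real.cos t : ℂ) - 1) / 2 * (Real.sin (2 * φ) : ℂ)
noncomputable def su2b1' (φ : ℝ) : ℝ → ℂ := fun t =>
  -(Real.sin t : ℂ) / 2 * (Real.sin (2 * φ) : ℂ)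
noncomputable def su2d1 (φ : ℝ) : ℝ → ℂ := fun t =>
  (Real.cos φ : ℂ) * (Real.sin t : ℂ)
noncomputable def su2d1' (φ : ℝ) : ℝ → ℂ := fun t =>
  (Real.cos φ : ℂ) * (Real.cos t : ℂ)
noncomputable def su2b2 (φ : ℝ) : ℝ → ℂ := fun t =>
  ((Real.cos t : ℂ) + 1) / 2 - ((Real.cos t : ℂ) - 1) / 2 * (Real.cos (2 * φ) : ℂ)
noncomputable def su2b2' (φ : ℝ) : ℝ → ℂ := fun t =>
  -(Real.sin t : ℂ) / 2 - -(Real.sin t : ℂ) / 2 * (Real.cos (2 * φ) : ℂ)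
noncomputable def su2d2 (φ : ℝ) : ℝ → ℂ := fun t =>
  (Real.sin t : ℂ) * (Real.sin φ : ℂ)
noncomputable def su2d2' (φ : ℝ) : ℝ → ℂ := fun t =>
  (Real.cos t : ℂ) * (Real.sin φ : ℂ)

lemma su2ha1 (φ t : ℝ) : HasDerivAt (su2a1 φ) (su2a1' φ t) t := by
  have h := (((Real.hasDerivAt_cos t).ofReal_comp.add_const (1:ℂ)).div_const 2).add
    ((((Real.hasDerivAt_cos t).ofReal_comp.sub_const (1:ℂ)).div_const 2).mul_const
      ((Real.cos (2*φ) : ℂ)))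
  refine h.congr_deriv ?_
  unfold su2a1'; push_cast; ring

lemma su2hb1 (φ t : ℝ) : HasDerivAt (su2b1 φ) (su2b1' φ t) t := by
  have h := (((Real.hasDerivAt_cos t).ofReal_comp.sub_const (1:ℂ)).div_const 2).mul_const
      ((Real.sin (2*φ) : ℂ))
  refine h.congr_deriv ?_
  unfold su2b1'; push_cast; ring

lemma su2hd1 (φ t : ℝ) : HasDerivAt (su2d1 φ) (su2d1' φ t) t := by
  have h := (Real.hasDerivAt_sin t).ofReal_comp.const_mul ((Real.cos φ : ℂ))
  exact h

lemma su2hb2 (φ t : ℝ) : HasDerivAt (su2b2 φ) (su2b2' φ t) t := by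
  have h := ((((Real.hasDerivAt_cos t).ofReal_comp.add_const (1:ℂ)).div_const 2)).sub
    ((((Real.hasDerivAt_cos t).ofReal_comp.sub_const (1:ℂ)).div_const 2).mul_const
      ((Real.cos (2*φ) : ℂ)))
  refine h.congr_deriv ?_
  unfold su2b2'; push_cast; ring

lemma su2hd2 (φ t : ℝ) : HasDerivAt (su2d2 φ) (su2d2' φ t) t := by
  have h := (Real.hasDerivAt_sin t).ofReal_comp.mul_const ((Real.sin φ : ℂ))
  exact h

private lemma hpyC (φ : ℝ) : (Real.sin φ : ℂ)^2 + (Real.cos φ : ℂ)^2 = 1 := by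
  exact_mod_cast congrArg (Complex.ofReal) (Real.sin_sq_add_cos_sq φ)

/- the ODE coefficient identities, with p = I sin φ, q = -(I cos φ) -/
lemma su2cA1 (φ t : ℝ) :
    su2a1' φ t = -(su2d1 φ t * (-(Complex.I * (Real.cos φ : ℂ))) * Complex.I) := by
  unfold su2a1' su2d1
  simp only [Real.cos_two_mul]
  linear_combination (norm := (push_cast; ring1))
    (-(Real.sin t : ℂ) * (Real.cos φ : ℂ)^2) * Complex.I_sq

lemma su2cB1 (φ t : ℝ) :
    su2b1' φ t = su2d1 φ t * (Complex.I * (Real.sin φ : ℂ)) * Complex.I := by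
  unfold su2b1' su2d1
  simp only [Real.sin_two_mul]
  linear_combination (norm := (push_cast; ring1))
    (-(Real.sin t : ℂ) * (Real.sin φ : ℂ) * (Real.cos φ : ℂ)) * Complex.I_sq

lemma su2cD1 (φ t : ℝ) :
    su2d1' φ t = (su2a1 φ t * (-(Complex.I * (Real.cos φ : ℂ)))
      - su2b1 φ t * (Complex.I * (Real.sin φ : ℂ))) * Complex.I := by
  unfold su2d1' su2a1 su2b1
  simp only [Real.cos_two_mul, Real.sin_two_mul]
  linear_combination (norm := (push_cast; ring1))
    ((Real.cos φ : ℂ) * (Real.cos t : ℂ)) * Complex.I_sq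
    + ((Real.cos φ : ℂ) * ((Real.cos t : ℂ) - 1) * Complex.I^2) * hpyC φ

lemma su2cA2 (φ t : ℝ) :
    su2b1' φ t = -(su2d2 φ t * (-(Complex.I * (Real.cos φ : ℂ))) * Complex.I) := by
  unfold su2b1' su2d2
  simp only [Real.sin_two_mul]
  linear_combination (norm := (push_cast; ring1))
    (-(Real.sin t : ℂ) * (Real.sin φ : ℂ) * (Real.cos φ : ℂ)) * Complex.I_sq

lemma su2cB2 (φ t : ℝ) :
    su2b2' φ t = su2d2 φ t * (Complex.I * (Real.sin φ : ℂ)) * Complex.I := by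
  unfold su2b2' su2d2
  simp only [Real.cos_two_mul]
  linear_combination (norm := (push_cast; ring1))
    (-(Real.sin t : ℂ) * (Real.sin φ : ℂ)^2) * Complex.I_sq
    + ((Real.sin t : ℂ)) * hpyC φ

lemma su2cD2 (φ t : ℝ) :
    su2d2' φ t = (su2b1 φ t * (-(Complex.I * (Real.cos φ : ℂ)))
      - su2b2 φ t * (Complex.I * (Real.sin φ : ℂ))) * Complex.I := by
  unfold su2d2' su2b1 su2b2
  simp only [Real.cos_two_mul, Real.sin_two_mul]
  linear_combination (norm := (push_cast; ring1))
    ((Real.cos t : ℂ) * (Real.sin φ : ℂ)) * Complex.I_sq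

/-- Adjoint action of `T(θ,φ)` on `S₁, S₂` in a complex Banach algebra with
su(2) commutation relations. -/
theorem stmt_4 {A : Type*} [NormedRing A] [NormedAlgebra ℂ A] [CompleteSpace A]
    (S₁ S₂ S₃ : A)
    (h12 : S₁ * S₂ - S₂ * S₁ = Complex.I • S₃)
    (h23 : S₂ * S₃ - S₃ * S₂ = Complex.I • S₁)
    (h31 : S₃ * S₁ - S₁ * S₃ = Complex.I • S₂)
    (θ φ : ℝ) :
    let Sp : A := S₁ + Complex.I • S₂
    let Sm : A := S₁ - Complex.I • S₂
    let L : A := Complex.exp (Complex.I * φ) • Sm - Complex.exp (-(Complex.I * φ)) • Sp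
    let T : A := NormedSpace.exp (((θ : ℂ) / 2) • L)
    let Tinv : A := NormedSpace.exp (-(((θ : ℂ) / 2) • L))
    Tinv * S₁ * T
        = ((((Real.cos θ : ℂ) + 1) / 2)
              + (((Real.cos θ : ℂ) - 1) / 2) * (Real.cos (2 * φ) : ℂ)) • S₁
          + ((((Real.cos θ : ℂ) - 1) / 2) * (Real.sin (2 * φ) : ℂ)) • S₂
          + ((Real.cos φ : ℂ) * (Real.sin θ : ℂ)) • S₃
    ∧ Tinv * S₂ * T
        = ((((Real.cos θ : ℂ) - 1) / 2) * (Real.sin (2 * φ) : ℂ)) • S₁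
          + ((((Real.cos θ : ℂ) + 1) / 2)
              - (((Real.cos θ : ℂ) - 1) / 2) * (Real.cos (2 * φ) : ℂ)) • S₂
          + ((Real.sin θ : ℂ) * (Real.sin φ : ℂ)) • S₃ := by
  intro Sp Sm L T Tinv
  set p : ℂ := Complex.I * (Real.sin φ : ℂ) with hp
  set q : ℂ := -(Complex.I * (Real.cos φ : ℂ)) with hq
  set M : A := p • S₁ + q • S₂ with hM
  have e1 : Complex.exp (Complex.I * φ) = (Real.cos φ : ℂ) + (Real.sin φ : ℂ) * Complex.I := by
    rw [mul_comm, Complex.exp_mul_I]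
    simp [Complex.ofReal_cos, Complex.ofReal_sin]
  have e2 : Complex.exp (-(Complex.I * φ)) = (Real.cos φ : ℂ) - (Real.sin φ : ℂ) * Complex.I := by
    rw [show -(Complex.I * (φ:ℂ)) = ((-φ : ℝ):ℂ) * Complex.I by push_cast; ring,
      Complex.exp_mul_I]
    push_cast [Real.cos_neg, Real.sin_neg]
    simp [Complex.ofReal_cos, Complex.ofReal_sin]
    ring
  have hL : ((θ : ℂ)/2) • L = θ • M := by
    show ((θ : ℂ)/2) • (Complex.exp (Complex.I * φ) • (S₁ - Complex.I • S₂)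
        - Complex.exp (-(Complex.I * φ)) • (S₁ + Complex.I • S₂)) = θ • (p • S₁ + q • S₂)
    rw [e1, e2, hp, hq]
    match_scalars <;> (simp only [Complex.coe_algebraMap]; ring)
  constructor
  · have hd : ∀ t, HasDerivAt (fun t => su2a1 φ t • S₁ + su2b1 φ t • S₂ + su2d1 φ t • S₃)
        ((su2a1 φ t • S₁ + su2b1 φ t • S₂ + su2d1 φ t • S₃) * M
          - M * (su2a1 φ t • S₁ + su2b1 φ t • S₂ + su2d1 φ t • S₃)) t := by
      intro t
      rw [hM, hp, hq]
      exact ode_sol S₁ S₂ S₃ h12 h23 h31 _ _ _ _ _ (su2a1' φ) (su2b1' φ) (su2d1' φ)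
        (su2ha1 φ) (su2hb1 φ) (su2hd1 φ) (su2cA1 φ) (su2cB1 φ) (su2cD1 φ) t
    have hc := conj_exp M (fun t => su2a1 φ t • S₁ + su2b1 φ t • S₂ + su2d1 φ t • S₃) hd θ
    have h0 : su2a1 φ 0 • S₁ + su2b1 φ 0 • S₂ + su2d1 φ 0 • S₃ = S₁ := by
      simp [su2a1, su2b1, su2d1]
    rw [h0] at hc
    show NormedSpace.exp (-(((θ : ℂ)/2) • L)) * S₁ * NormedSpace.exp (((θ : ℂ)/2) • L) = _
    rw [hL]
    exact hc
  · have hd : ∀ t, HasDerivAt (fun t => su2b1 φ t • S₁ + su2b2 φ t • S₂ + su2d2 φ t • S₃)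
        ((su2b1 φ t • S₁ + su2b2 φ t • S₂ + su2d2 φ t • S₃) * M
          - M * (su2b1 φ t • S₁ + su2b2 φ t • S₂ + su2d2 φ t • S₃)) t := by
      intro t
      rw [hM, hp, hq]
      exact ode_sol S₁ S₂ S₃ h12 h23 h31 _ _ _ _ _ (su2b1' φ) (su2b2' φ) (su2d2' φ)
        (su2hb1 φ) (su2hb2 φ) (su2hd2 φ) (su2cA2 φ) (su2cB2 φ) (su2cD2 φ) t
    have hc := conj_exp M (fun t => su2b1 φ t • S₁ + su2b2 φ t • S₂ + su2d2 φ t • S₃) hd θ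
    have h0 : su2b1 φ 0 • S₁ + su2b2 φ 0 • S₂ + su2d2 φ 0 • S₃ = S₂ := by
      simp [su2b1, su2b2, su2d2]
    rw [h0] at hc
    show NormedSpace.exp (-(((θ : ℂ)/2) • L)) * S₂ * NormedSpace.exp (((θ : ℂ)/2) • L) = _
    rw [hL]
    exact hc
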